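/- Let a > 0 and b ≥ 0 be real numbers. Define smooth functions on ℝ³ by X¹(x) = −2x₂/a, X²(x) = e^{−ax₁}[cos(bx₁)(x₃² − x₂²) − sin(bx₁)·2x₂x₃] + e^{ax₁}cos(bx₁)/a², X³(x) = e^{−ax₁}[−sin(bx₁)(x₃² − x₂²) − cos(bx₁)·2x₂x₃] − e^{ax₁}sin(bx₁)/a², and first-order differential operators L₁ f = ∂f/∂x₁, L₂ f = e^{ax₁}cos(bx₁)·∂f/∂x₂ + e^{ax₁}sin(bx₁)·∂f/∂x₃, L₃ f = −e^{ax₁}sin(bx₁)·∂f/∂x₂ + e^{ax₁}cos(bx₁)·∂f/∂x₃. Define the matrix of functions C by C₁₂ = C₂₁ = a·X² − b·X³, C₁₃ = C₃₁ = b·X² + a·X³, C₂₂ = C₃₃ = −2a·X¹, and all other entries 0. Then for all j, k ∈ {1,2,3} and all x ∈ ℝ³: L_j(X^k)(x) + L_k(X^j)(x) + C_{jk}(x) = 0. (This is the Killing field equation, in the left-invariant orthonormal frame, for the vector field X₁ on the group with triple (a,b,−b), which is isometric to hyperbolic three-space of curvature −a².) -/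

import Mathlib

/-- Partial derivative in the first coordinate of `ℝ³ = ℝ × ℝ × ℝ`. -/
noncomputable def pd1 (f : ℝ × ℝ × ℝ → ℝ) (x : ℝ × ℝ × ℝ) : ℝ := fderiv ℝ f x (1, 0, 0)

/-- Partial derivative in the second coordinate. -/
noncomputable def pd2 (f : ℝ × ℝ × ℝ → ℝ) (x : ℝ × ℝ × ℝ) : ℝ := fderiv ℝ f x (0, 1, 0)

/-- Partial derivative in the third coordinate. -/
noncomputable def pd3 (f : ℝ × ℝ × ℝ → ℝ) (x : ℝ × ℝ × ℝ) : ℝ := fderiv ℝ f x (0, 0, 1)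

/-- The components of the vector field `X₁`:
`X¹ = −2x₂/a`,
`X² = e^{−ax₁}[cos(bx₁)(x₃² − x₂²) − sin(bx₁)·2x₂x₃] + e^{ax₁}cos(bx₁)/a²`,
`X³ = e^{−ax₁}[−sin(bx₁)(x₃² − x₂²) − cos(bx₁)·2x₂x₃] − e^{ax₁}sin(bx₁)/a²`. -/
noncomputable def Xcomp (a b : ℝ) : Fin 3 → ℝ × ℝ × ℝ → ℝ :=
  ![fun x => -2 * x.2.1 / a,
    fun x => Real.exp (-(a * x.1)) *
        (Real.cos (b * x.1) * (x.2.2 ^ 2 - x.2.1 ^ 2) -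
          Real.sin (b * x.1) * (2 * x.2.1 * x.2.2)) +
      Real.exp (a * x.1) * Real.cos (b * x.1) / a ^ 2,
    fun x => Real.exp (-(a * x.1)) *
        (-(Real.sin (b * x.1) * (x.2.2 ^ 2 - x.2.1 ^ 2)) -
          Real.cos (b * x.1) * (2 * x.2.1 * x.2.2)) -
      Real.exp (a * x.1) * Real.sin (b * x.1) / a ^ 2]

/-- The left-invariant frame operators `L₁ = ∂₁`,
`L₂ = e^{ax₁}cos(bx₁) ∂₂ + e^{ax₁}sin(bx₁) ∂₃`,
`L₃ = −e^{ax₁}sin(bx₁) ∂₂ + e^{ax₁}cos(bx₁) ∂₃` for the case `(a, b, −b)`. -/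
noncomputable def Lop (a b : ℝ) : Fin 3 → (ℝ × ℝ × ℝ → ℝ) → ℝ × ℝ × ℝ → ℝ :=
  ![fun f x => pd1 f x,
    fun f x => Real.exp (a * x.1) * Real.cos (b * x.1) * pd2 f x +
      Real.exp (a * x.1) * Real.sin (b * x.1) * pd3 f x,
    fun f x => -(Real.exp (a * x.1) * Real.sin (b * x.1)) * pd2 f x +
      Real.exp (a * x.1) * Real.cos (b * x.1) * pd3 f x]

/-- The correction matrix `C`, with `C₁₂ = C₂₁ = a X² − b X³`, `C₁₃ = C₃₁ = b X² + a X³`,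
`C₂₂ = C₃₃ = −2a X¹`, all other entries `0`. -/
noncomputable def Cmat (a b : ℝ) : Fin 3 → Fin 3 → ℝ × ℝ × ℝ → ℝ :=
  ![![fun _ => 0,
      fun x => a * Xcomp a b 1 x - b * Xcomp a b 2 x,
      fun x => b * Xcomp a b 1 x + a * Xcomp a b 2 x],
    ![fun x => a * Xcomp a b 1 x - b * Xcomp a b 2 x,
      fun x => -2 * a * Xcomp a b 0 x,
      fun _ => 0],
    ![fun x => b * Xcomp a b 1 x + a * Xcomp a b 2 x,
      fun _ => 0,
      fun x => -2 * a * Xcomp a b 0 x]]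

lemma pd1_eq (f : ℝ × ℝ × ℝ → ℝ) (x : ℝ × ℝ × ℝ) (hf : DifferentiableAt ℝ f x) :
    pd1 f x = deriv (fun t => f (t, x.2.1, x.2.2)) x.1 := by
  have hh : HasDerivAt (fun t : ℝ => (t, x.2.1, x.2.2)) ((1 : ℝ), (0 : ℝ), (0 : ℝ)) x.1 := by
    exact (hasDerivAt_id x.1).prodMk (hasDerivAt_const x.1 (x.2.1, x.2.2))
  have h2 := (hf.hasFDerivAt.comp_hasDerivAt x.1 (by simpa using hh)).deriv
  simpa [pd1, Function.comp_def] using h2.symm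

lemma pd2_eq (f : ℝ × ℝ × ℝ → ℝ) (x : ℝ × ℝ × ℝ) (hf : DifferentiableAt ℝ f x) :
    pd2 f x = deriv (fun t => f (x.1, t, x.2.2)) x.2.1 := by
  have hh : HasDerivAt (fun t : ℝ => (x.1, t, x.2.2)) ((0 : ℝ), (1 : ℝ), (0 : ℝ)) x.2.1 := by
    exact (hasDerivAt_const x.2.1 x.1).prodMk
      ((hasDerivAt_id x.2.1).prodMk (hasDerivAt_const x.2.1 x.2.2))
  have h2 := (hf.hasFDerivAt.comp_hasDerivAt x.2.1 (by simpa using hh)).deriv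
  simpa [pd2, Function.comp_def] using h2.symm

lemma pd3_eq (f : ℝ × ℝ × ℝ → ℝ) (x : ℝ × ℝ × ℝ) (hf : DifferentiableAt ℝ f x) :
    pd3 f x = deriv (fun t => f (x.1, x.2.1, t)) x.2.2 := by
  have hh : HasDerivAt (fun t : ℝ => (x.1, x.2.1, t)) ((0 : ℝ), (0 : ℝ), (1 : ℝ)) x.2.2 := by
    exact (hasDerivAt_const x.2.2 x.1).prodMk
      ((hasDerivAt_const x.2.2 x.2.1).prodMk (hasDerivAt_id x.2.2))
  have h2 := (hf.hasFDerivAt.comp_hasDerivAt x.2.2 (by simpa using hh)).deriv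
  simpa [pd3, Function.comp_def] using h2.symm

section helpers
variable (a b y z : ℝ)

lemma hd_exp_neg (t : ℝ) : HasDerivAt (fun t => Real.exp (-(a*t))) (-a * Real.exp (-(a*t))) t := by
  have h : HasDerivAt (fun t : ℝ => -(a*t)) (-a) t := by
    simpa [Pi.neg_def] using ((hasDerivAt_id t).const_mul a).neg
  simpa [mul_comm] using h.exp

lemma hd_exp_pos (t : ℝ) : HasDerivAt (fun t => Real.exp (a*t)) (a * Real.exp (a*t)) t := by
  have h : HasDerivAt (fun t : ℝ => a*t) a t := by simpa using (hasDerivAt_id t).const_mul a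
  simpa [mul_comm] using h.exp

lemma hd_cos (t : ℝ) : HasDerivAt (fun t => Real.cos (b*t)) (-b * Real.sin (b*t)) t := by
  have h : HasDerivAt (fun t : ℝ => b*t) b t := by simpa using (hasDerivAt_id t).const_mul b
  have := h.cos
  convert this using 1; ring

lemma hd_sin (t : ℝ) : HasDerivAt (fun t => Real.sin (b*t)) (b * Real.cos (b*t)) t := by
  have h : HasDerivAt (fun t : ℝ => b*t) b t := by simpa using (hasDerivAt_id t).const_mul b
  simpa [mul_comm] using h.sin

lemma hd_X1_t (t : ℝ) :
    HasDerivAt (fun t => Real.exp (-(a*t)) * (Real.cos (b*t)*(z^2-y^2) - Real.sin (b*t)*(2*y*z))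
        + Real.exp (a*t) * Real.cos (b*t) / a^2)
      (-a * Real.exp (-(a*t)) * (Real.cos (b*t)*(z^2-y^2) - Real.sin (b*t)*(2*y*z))
        + Real.exp (-(a*t)) * (-b * Real.sin (b*t)*(z^2-y^2) - b * Real.cos (b*t)*(2*y*z))
        + (a * Real.cos (b*t) - b * Real.sin (b*t)) * Real.exp (a*t) / a^2) t := by
  have h1 := (hd_exp_neg a t).mul
    (((hd_cos b t).mul_const (z^2-y^2)).sub ((hd_sin b t).mul_const (2*y*z)))
  have h2 := (((hd_exp_pos a t).mul (hd_cos b t))).div_const (a^2)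
  exact (h1.add h2).congr_deriv (by simp only [Pi.mul_apply, Pi.sub_apply]; ring)

lemma hd_X2_t (t : ℝ) :
    HasDerivAt (fun t => Real.exp (-(a*t)) * (-(Real.sin (b*t)*(z^2-y^2)) - Real.cos (b*t)*(2*y*z))
        - Real.exp (a*t) * Real.sin (b*t) / a^2)
      (-a * Real.exp (-(a*t)) * (-(Real.sin (b*t)*(z^2-y^2)) - Real.cos (b*t)*(2*y*z))
        + Real.exp (-(a*t)) * (-b * Real.cos (b*t)*(z^2-y^2) + b * Real.sin (b*t)*(2*y*z))
        - (a * Real.sin (b*t) + b * Real.cos (b*t)) * Real.exp (a*t) / a^2) t := by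
  have h1 := (hd_exp_neg a t).mul
    ((((hd_sin b t).mul_const (z^2-y^2)).neg).sub ((hd_cos b t).mul_const (2*y*z)))
  have h2 := (((hd_exp_pos a t).mul (hd_sin b t))).div_const (a^2)
  exact (h1.sub h2).congr_deriv (by simp only [Pi.mul_apply, Pi.sub_apply, Pi.neg_apply]; ring)

lemma hd_sq_sub (y z : ℝ) : HasDerivAt (fun y : ℝ => z^2 - y^2) (-(2*y)) y := by
  simpa [Pi.sub_def] using (hasDerivAt_const y (z^2)).sub (hasDerivAt_pow 2 y)

lemma hd_sq_sub' (y z : ℝ) : HasDerivAt (fun z : ℝ => z^2 - y^2) (2*z) z := by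
  simpa [Pi.sub_def] using (hasDerivAt_pow 2 z).sub (hasDerivAt_const z (y^2))

lemma hd_lin (y z : ℝ) : HasDerivAt (fun y : ℝ => 2*y*z) (2*z) y := by
  have : HasDerivAt (fun y : ℝ => 2*y) 2 y := by simpa using (hasDerivAt_id y).const_mul 2
  simpa using this.mul_const z

lemma hd_lin' (y z : ℝ) : HasDerivAt (fun z : ℝ => 2*y*z) (2*y) z := by
  simpa using (hasDerivAt_id z).const_mul (2*y)

end helpers

section diff
variable (a b : ℝ) (x : ℝ × ℝ × ℝ)

lemma diff_X0 : DifferentiableAt ℝ (Xcomp a b 0) x := by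
  simp only [Xcomp, Matrix.cons_val_zero]; fun_prop

lemma diff_X1 : DifferentiableAt ℝ (Xcomp a b 1) x := by
  simp only [Xcomp, Matrix.cons_val_one, Matrix.head_cons, Matrix.cons_val_zero]; fun_prop

lemma diff_X2 : DifferentiableAt ℝ (Xcomp a b 2) x := by
  simp only [Xcomp, Matrix.cons_val_two, Matrix.tail_cons, Matrix.head_cons]; fun_prop

lemma pd1_X0 : pd1 (Xcomp a b 0) x = 0 := by
  rw [pd1_eq _ _ (diff_X0 a b x)]
  simp only [Xcomp, Matrix.cons_val_zero]
  exact deriv_const _ _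

lemma pd2_X0 : pd2 (Xcomp a b 0) x = -2 / a := by
  rw [pd2_eq _ _ (diff_X0 a b x)]
  simp only [Xcomp, Matrix.cons_val_zero]
  have h : HasDerivAt (fun t : ℝ => -2 * t / a) (-2 / a) x.2.1 := by
    simpa [mul_div_assoc] using ((hasDerivAt_id x.2.1).const_mul (-2 : ℝ)).div_const a
  exact h.deriv

lemma pd3_X0 : pd3 (Xcomp a b 0) x = 0 := by
  rw [pd3_eq _ _ (diff_X0 a b x)]
  simp only [Xcomp, Matrix.cons_val_zero]
  exact deriv_const _ _

lemma pd1_X1 : pd1 (Xcomp a b 1) x =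
    -a * Real.exp (-(a*x.1)) * (Real.cos (b*x.1)*(x.2.2^2-x.2.1^2) - Real.sin (b*x.1)*(2*x.2.1*x.2.2))
      + Real.exp (-(a*x.1)) * (-b * Real.sin (b*x.1)*(x.2.2^2-x.2.1^2) - b * Real.cos (b*x.1)*(2*x.2.1*x.2.2))
      + (a * Real.cos (b*x.1) - b * Real.sin (b*x.1)) * Real.exp (a*x.1) / a^2 := by
  rw [pd1_eq _ _ (diff_X1 a b x)]
  simp only [Xcomp, Matrix.cons_val_one, Matrix.head_cons]
  exact (hd_X1_t a b x.2.1 x.2.2 x.1).deriv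

lemma pd1_X2 : pd1 (Xcomp a b 2) x =
    -a * Real.exp (-(a*x.1)) * (-(Real.sin (b*x.1)*(x.2.2^2-x.2.1^2)) - Real.cos (b*x.1)*(2*x.2.1*x.2.2))
      + Real.exp (-(a*x.1)) * (-b * Real.cos (b*x.1)*(x.2.2^2-x.2.1^2) + b * Real.sin (b*x.1)*(2*x.2.1*x.2.2))
      - (a * Real.sin (b*x.1) + b * Real.cos (b*x.1)) * Real.exp (a*x.1) / a^2 := by
  rw [pd1_eq _ _ (diff_X2 a b x)]
  simp only [Xcomp, Matrix.cons_val_two, Matrix.tail_cons, Matrix.head_cons]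
  exact (hd_X2_t a b x.2.1 x.2.2 x.1).deriv

lemma pd2_X1 : pd2 (Xcomp a b 1) x =
    Real.exp (-(a*x.1)) * (Real.cos (b*x.1) * (-(2*x.2.1)) - Real.sin (b*x.1) * (2*x.2.2)) := by
  rw [pd2_eq _ _ (diff_X1 a b x)]
  simp only [Xcomp, Matrix.cons_val_one, Matrix.head_cons]
  have h := ((((hd_sq_sub x.2.1 x.2.2).const_mul (Real.cos (b*x.1))).sub
      ((hd_lin x.2.1 x.2.2).const_mul (Real.sin (b*x.1)))).const_mul
      (Real.exp (-(a*x.1)))).add_const (Real.exp (a*x.1) * Real.cos (b*x.1) / a^2)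
  exact h.deriv

lemma pd3_X1 : pd3 (Xcomp a b 1) x =
    Real.exp (-(a*x.1)) * (Real.cos (b*x.1) * (2*x.2.2) - Real.sin (b*x.1) * (2*x.2.1)) := by
  rw [pd3_eq _ _ (diff_X1 a b x)]
  simp only [Xcomp, Matrix.cons_val_one, Matrix.head_cons]
  have h := ((((hd_sq_sub' x.2.1 x.2.2).const_mul (Real.cos (b*x.1))).sub
      ((hd_lin' x.2.1 x.2.2).const_mul (Real.sin (b*x.1)))).const_mul
      (Real.exp (-(a*x.1)))).add_const (Real.exp (a*x.1) * Real.cos (b*x.1) / a^2)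
  exact h.deriv

lemma pd2_X2 : pd2 (Xcomp a b 2) x =
    Real.exp (-(a*x.1)) * (-(Real.sin (b*x.1) * (-(2*x.2.1))) - Real.cos (b*x.1) * (2*x.2.2)) := by
  rw [pd2_eq _ _ (diff_X2 a b x)]
  simp only [Xcomp, Matrix.cons_val_two, Matrix.tail_cons, Matrix.head_cons]
  have h := (((((hd_sq_sub x.2.1 x.2.2).const_mul (Real.sin (b*x.1))).neg).sub
      ((hd_lin x.2.1 x.2.2).const_mul (Real.cos (b*x.1)))).const_mul
      (Real.exp (-(a*x.1)))).sub_const (Real.exp (a*x.1) * Real.sin (b*x.1) / a^2)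
  exact h.deriv

lemma pd3_X2 : pd3 (Xcomp a b 2) x =
    Real.exp (-(a*x.1)) * (-(Real.sin (b*x.1) * (2*x.2.2)) - Real.cos (b*x.1) * (2*x.2.1)) := by
  rw [pd3_eq _ _ (diff_X2 a b x)]
  simp only [Xcomp, Matrix.cons_val_two, Matrix.tail_cons, Matrix.head_cons]
  have h := (((((hd_sq_sub' x.2.1 x.2.2).const_mul (Real.sin (b*x.1))).neg).sub
      ((hd_lin' x.2.1 x.2.2).const_mul (Real.cos (b*x.1)))).const_mul
      (Real.exp (-(a*x.1)))).sub_const (Real.exp (a*x.1) * Real.sin (b*x.1) / a^2)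
  exact h.deriv

end diff

/-- The Killing field equation for the vector field `X₁` on the group with triple
`(a, b, −b)`, which is isometric to hyperbolic three-space of curvature `−a²`. -/
theorem hyperbolic_killing (a b : ℝ) (ha : 0 < a) (hb : 0 ≤ b) :
    ∀ (j k : Fin 3) (x : ℝ × ℝ × ℝ),
      Lop a b j (Xcomp a b k) x + Lop a b k (Xcomp a b j) x + Cmat a b j k x = 0 := by
  intro j k x
  have ha' : a ≠ 0 := ne_of_gt ha
  have hE : Real.exp (a * x.1) ≠ 0 := (Real.exp_pos _).ne'
  have hsc : Real.sin (b * x.1)^2 + Real.cos (b * x.1)^2 = 1 := Real.sin_sq_add_cos_sq _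
  have hsc2 : Real.sin (x.1 * b)^2 + Real.cos (x.1 * b)^2 = 1 := Real.sin_sq_add_cos_sq _
  have hX0 : Xcomp a b 0 x = -2 * x.2.1 / a := rfl
  have hX1 : Xcomp a b 1 x = Real.exp (-(a * x.1)) *
        (Real.cos (b * x.1) * (x.2.2 ^ 2 - x.2.1 ^ 2) -
          Real.sin (b * x.1) * (2 * x.2.1 * x.2.2)) +
      Real.exp (a * x.1) * Real.cos (b * x.1) / a ^ 2 := rfl
  have hX2 : Xcomp a b 2 x = Real.exp (-(a * x.1)) *
        (-(Real.sin (b * x.1) * (x.2.2 ^ 2 - x.2.1 ^ 2)) -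
          Real.cos (b * x.1) * (2 * x.2.1 * x.2.2)) -
      Real.exp (a * x.1) * Real.sin (b * x.1) / a ^ 2 := rfl
  have e00 : Lop a b 0 (Xcomp a b 0) x + Lop a b 0 (Xcomp a b 0) x + Cmat a b 0 0 x = 0 := by
    simp only [Lop, Cmat, Fin.isValue, Matrix.cons_val_zero, Matrix.cons_val_one,
      Matrix.head_cons, Matrix.cons_val_two, Matrix.tail_cons,
      pd1_X0, pd2_X0, pd3_X0, pd1_X1, pd2_X1, pd3_X1, pd1_X2, pd2_X2, pd3_X2, hX0, hX1, hX2,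
      Real.exp_neg]
    field_simp
    all_goals
      first
        | ring1
        | linear_combination (-(4*a*x.2.1*Real.exp (a*x.1))) * hsc2
        | linear_combination (4*a*x.2.1*Real.exp (a*x.1)) * hsc2
        | linear_combination (-(4*a*x.2.1*Real.exp (a*x.1)^2)) * hsc2
        | linear_combination (4*a*x.2.1*Real.exp (a*x.1)^2) * hsc2
        | linear_combination (-(4*a*x.2.1*Real.exp (a*x.1))) * hsc
        | linear_combination (4*a*x.2.1*Real.exp (a*x.1)) * hsc
        | linear_combination (-(4*a*x.2.1*Real.exp (a*x.1)^2)) * hsc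
        | linear_combination (4*a*x.2.1*Real.exp (a*x.1)^2) * hsc
  have e01 : Lop a b 0 (Xcomp a b 1) x + Lop a b 1 (Xcomp a b 0) x + Cmat a b 0 1 x = 0 := by
    simp only [Lop, Cmat, Fin.isValue, Matrix.cons_val_zero, Matrix.cons_val_one,
      Matrix.head_cons, Matrix.cons_val_two, Matrix.tail_cons,
      pd1_X0, pd2_X0, pd3_X0, pd1_X1, pd2_X1, pd3_X1, pd1_X2, pd2_X2, pd3_X2, hX0, hX1, hX2,
      Real.exp_neg]
    field_simp
    all_goals
      first
        | ring1
        | linear_combination (-(4*a*x.2.1*Real.exp (a*x.1))) * hsc2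
        | linear_combination (4*a*x.2.1*Real.exp (a*x.1)) * hsc2
        | linear_combination (-(4*a*x.2.1*Real.exp (a*x.1)^2)) * hsc2
        | linear_combination (4*a*x.2.1*Real.exp (a*x.1)^2) * hsc2
        | linear_combination (-(4*a*x.2.1*Real.exp (a*x.1))) * hsc
        | linear_combination (4*a*x.2.1*Real.exp (a*x.1)) * hsc
        | linear_combination (-(4*a*x.2.1*Real.exp (a*x.1)^2)) * hsc
        | linear_combination (4*a*x.2.1*Real.exp (a*x.1)^2) * hsc
  have e02 : Lop a b 0 (Xcomp a b 2) x + Lop a b 2 (Xcomp a b 0) x + Cmat a b 0 2 x = 0 := by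
    simp only [Lop, Cmat, Fin.isValue, Matrix.cons_val_zero, Matrix.cons_val_one,
      Matrix.head_cons, Matrix.cons_val_two, Matrix.tail_cons,
      pd1_X0, pd2_X0, pd3_X0, pd1_X1, pd2_X1, pd3_X1, pd1_X2, pd2_X2, pd3_X2, hX0, hX1, hX2,
      Real.exp_neg]
    field_simp
    all_goals
      first
        | ring1
        | linear_combination (-(4*a*x.2.1*Real.exp (a*x.1))) * hsc2
        | linear_combination (4*a*x.2.1*Real.exp (a*x.1)) * hsc2
        | linear_combination (-(4*a*x.2.1*Real.exp (a*x.1)^2)) * hsc2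
        | linear_combination (4*a*x.2.1*Real.exp (a*x.1)^2) * hsc2
        | linear_combination (-(4*a*x.2.1*Real.exp (a*x.1))) * hsc
        | linear_combination (4*a*x.2.1*Real.exp (a*x.1)) * hsc
        | linear_combination (-(4*a*x.2.1*Real.exp (a*x.1)^2)) * hsc
        | linear_combination (4*a*x.2.1*Real.exp (a*x.1)^2) * hsc
  have e10 : Lop a b 1 (Xcomp a b 0) x + Lop a b 0 (Xcomp a b 1) x + Cmat a b 1 0 x = 0 := by
    simp only [Lop, Cmat, Fin.isValue, Matrix.cons_val_zero, Matrix.cons_val_one,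
      Matrix.head_cons, Matrix.cons_val_two, Matrix.tail_cons,
      pd1_X0, pd2_X0, pd3_X0, pd1_X1, pd2_X1, pd3_X1, pd1_X2, pd2_X2, pd3_X2, hX0, hX1, hX2,
      Real.exp_neg]
    field_simp
    all_goals
      first
        | ring1
        | linear_combination (-(4*a*x.2.1*Real.exp (a*x.1))) * hsc2
        | linear_combination (4*a*x.2.1*Real.exp (a*x.1)) * hsc2
        | linear_combination (-(4*a*x.2.1*Real.exp (a*x.1)^2)) * hsc2
        | linear_combination (4*a*x.2.1*Real.exp (a*x.1)^2) * hsc2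
        | linear_combination (-(4*a*x.2.1*Real.exp (a*x.1))) * hsc
        | linear_combination (4*a*x.2.1*Real.exp (a*x.1)) * hsc
        | linear_combination (-(4*a*x.2.1*Real.exp (a*x.1)^2)) * hsc
        | linear_combination (4*a*x.2.1*Real.exp (a*x.1)^2) * hsc
  have e11 : Lop a b 1 (Xcomp a b 1) x + Lop a b 1 (Xcomp a b 1) x + Cmat a b 1 1 x = 0 := by
    simp only [Lop, Cmat, Fin.isValue, Matrix.cons_val_zero, Matrix.cons_val_one,
      Matrix.head_cons, Matrix.cons_val_two, Matrix.tail_cons,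
      pd1_X0, pd2_X0, pd3_X0, pd1_X1, pd2_X1, pd3_X1, pd1_X2, pd2_X2, pd3_X2, hX0, hX1, hX2,
      Real.exp_neg]
    field_simp
    all_goals
      first
        | ring1
        | linear_combination (-(4*a*x.2.1*Real.exp (a*x.1))) * hsc2
        | linear_combination (4*a*x.2.1*Real.exp (a*x.1)) * hsc2
        | linear_combination (-(4*a*x.2.1*Real.exp (a*x.1)^2)) * hsc2
        | linear_combination (4*a*x.2.1*Real.exp (a*x.1)^2) * hsc2
        | linear_combination (-(4*a*x.2.1*Real.exp (a*x.1))) * hsc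
        | linear_combination (4*a*x.2.1*Real.exp (a*x.1)) * hsc
        | linear_combination (-(4*a*x.2.1*Real.exp (a*x.1)^2)) * hsc
        | linear_combination (4*a*x.2.1*Real.exp (a*x.1)^2) * hsc
        | linear_combination (-(4*x.2.1)) * hsc2
  have e12 : Lop a b 1 (Xcomp a b 2) x + Lop a b 2 (Xcomp a b 1) x + Cmat a b 1 2 x = 0 := by
    simp only [Lop, Cmat, Fin.isValue, Matrix.cons_val_zero, Matrix.cons_val_one,
      Matrix.head_cons, Matrix.cons_val_two, Matrix.tail_cons,
      pd1_X0, pd2_X0, pd3_X0, pd1_X1, pd2_X1, pd3_X1, pd1_X2, pd2_X2, pd3_X2, hX0, hX1, hX2,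
      Real.exp_neg]
    field_simp
    all_goals
      first
        | ring1
        | linear_combination (-(4*a*x.2.1*Real.exp (a*x.1))) * hsc2
        | linear_combination (4*a*x.2.1*Real.exp (a*x.1)) * hsc2
        | linear_combination (-(4*a*x.2.1*Real.exp (a*x.1)^2)) * hsc2
        | linear_combination (4*a*x.2.1*Real.exp (a*x.1)^2) * hsc2
        | linear_combination (-(4*a*x.2.1*Real.exp (a*x.1))) * hsc
        | linear_combination (4*a*x.2.1*Real.exp (a*x.1)) * hsc
        | linear_combination (-(4*a*x.2.1*Real.exp (a*x.1)^2)) * hsc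
        | linear_combination (4*a*x.2.1*Real.exp (a*x.1)^2) * hsc
  have e20 : Lop a b 2 (Xcomp a b 0) x + Lop a b 0 (Xcomp a b 2) x + Cmat a b 2 0 x = 0 := by
    simp only [Lop, Cmat, Fin.isValue, Matrix.cons_val_zero, Matrix.cons_val_one,
      Matrix.head_cons, Matrix.cons_val_two, Matrix.tail_cons,
      pd1_X0, pd2_X0, pd3_X0, pd1_X1, pd2_X1, pd3_X1, pd1_X2, pd2_X2, pd3_X2, hX0, hX1, hX2,
      Real.exp_neg]
    field_simp
    all_goals
      first
        | ring1
        | linear_combination (-(4*a*x.2.1*Real.exp (a*x.1))) * hsc2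
        | linear_combination (4*a*x.2.1*Real.exp (a*x.1)) * hsc2
        | linear_combination (-(4*a*x.2.1*Real.exp (a*x.1)^2)) * hsc2
        | linear_combination (4*a*x.2.1*Real.exp (a*x.1)^2) * hsc2
        | linear_combination (-(4*a*x.2.1*Real.exp (a*x.1))) * hsc
        | linear_combination (4*a*x.2.1*Real.exp (a*x.1)) * hsc
        | linear_combination (-(4*a*x.2.1*Real.exp (a*x.1)^2)) * hsc
        | linear_combination (4*a*x.2.1*Real.exp (a*x.1)^2) * hsc
  have e21 : Lop a b 2 (Xcomp a b 1) x + Lop a b 1 (Xcomp a b 2) x + Cmat a b 2 1 x = 0 := by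
    simp only [Lop, Cmat, Fin.isValue, Matrix.cons_val_zero, Matrix.cons_val_one,
      Matrix.head_cons, Matrix.cons_val_two, Matrix.tail_cons,
      pd1_X0, pd2_X0, pd3_X0, pd1_X1, pd2_X1, pd3_X1, pd1_X2, pd2_X2, pd3_X2, hX0, hX1, hX2,
      Real.exp_neg]
    field_simp
    all_goals
      first
        | ring1
        | linear_combination (-(4*a*x.2.1*Real.exp (a*x.1))) * hsc2
        | linear_combination (4*a*x.2.1*Real.exp (a*x.1)) * hsc2
        | linear_combination (-(4*a*x.2.1*Real.exp (a*x.1)^2)) * hsc2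
        | linear_combination (4*a*x.2.1*Real.exp (a*x.1)^2) * hsc2
        | linear_combination (-(4*a*x.2.1*Real.exp (a*x.1))) * hsc
        | linear_combination (4*a*x.2.1*Real.exp (a*x.1)) * hsc
        | linear_combination (-(4*a*x.2.1*Real.exp (a*x.1)^2)) * hsc
        | linear_combination (4*a*x.2.1*Real.exp (a*x.1)^2) * hsc
  have e22 : Lop a b 2 (Xcomp a b 2) x + Lop a b 2 (Xcomp a b 2) x + Cmat a b 2 2 x = 0 := by
    simp only [Lop, Cmat, Fin.isValue, Matrix.cons_val_zero, Matrix.cons_val_one,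
      Matrix.head_cons, Matrix.cons_val_two, Matrix.tail_cons,
      pd1_X0, pd2_X0, pd3_X0, pd1_X1, pd2_X1, pd3_X1, pd1_X2, pd2_X2, pd3_X2, hX0, hX1, hX2,
      Real.exp_neg]
    field_simp
    all_goals
      first
        | ring1
        | linear_combination (-(4*a*x.2.1*Real.exp (a*x.1))) * hsc2
        | linear_combination (4*a*x.2.1*Real.exp (a*x.1)) * hsc2
        | linear_combination (-(4*a*x.2.1*Real.exp (a*x.1)^2)) * hsc2
        | linear_combination (4*a*x.2.1*Real.exp (a*x.1)^2) * hsc2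
        | linear_combination (-(4*a*x.2.1*Real.exp (a*x.1))) * hsc
        | linear_combination (4*a*x.2.1*Real.exp (a*x.1)) * hsc
        | linear_combination (-(4*a*x.2.1*Real.exp (a*x.1)^2)) * hsc
        | linear_combination (4*a*x.2.1*Real.exp (a*x.1)^2) * hsc
        | linear_combination (-(4*x.2.1)) * hsc2
  fin_cases j <;> fin_cases k
  exacts [e00, e01, e02, e10, e11, e12, e20, e21, e22]
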